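/- For every N ≥ 1 and all basis labels σ, τ ∈ {⇑,0,⇓}^N, the matrix entry ⟨τ|β|σ⟩ ∈ ℤ[y] of the operator β lies in y·ℤ[y²]; that is, ⟨τ|β|σ⟩ = y·p(y²) for some polynomial p with integer coefficients. (In other words, β applied to any canonical basis vector yields x^{1/2} times a vector of polynomials in x = y² with integer coefficients.) -/

import Mathlib

open Matrix BigOperators Finset Polynomial

noncomputable section

/-- The 6×6 matrix ρ over ℤ[y] on ℂ²⊗ℂ³, basis `(ε, σ)`, ε ∈ {0=↑,1=↓}, σ ∈ {0=⇑,1=0,2=⇓}. -/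
def rho : Matrix (Fin 2 × Fin 3) (Fin 2 × Fin 3) (Polynomial ℤ) :=
  Matrix.of fun p p' =>
    if p = (0,0) ∧ p' = (0,0) then 1
    else if p = (0,1) ∧ p' = (1,0) then Polynomial.X
    else if p = (0,2) ∧ p' = (0,2) then -1
    else if p = (0,2) ∧ p' = (1,1) then Polynomial.X
    else if p = (1,0) ∧ p' = (0,1) then Polynomial.X
    else if p = (1,0) ∧ p' = (1,0) then -1
    else if p = (1,1) ∧ p' = (0,2) then Polynomial.X
    else if p = (1,2) ∧ p' = (1,2) then 1
    else 0

/-- ρ acting on the auxiliary ℂ² and the j-th site of `(ℂ³)^{⊗N}`. -/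
def rhoAt {N : ℕ} (j : Fin N) :
    Matrix (Fin 2 × (Fin N → Fin 3)) (Fin 2 × (Fin N → Fin 3)) (Polynomial ℤ) :=
  Matrix.of fun p p' =>
    rho (p.1, p.2 j) (p'.1, p'.2 j) * if ∀ k, k ≠ j → p.2 k = p'.2 k then 1 else 0

/-- The operator β = ⟨↑| ρ_{a,N} ⋯ ρ_{a,1} |↓⟩ on `(ℂ³)^{⊗N}`, with entries in ℤ[y]. -/
def betaMat (N : ℕ) : Matrix (Fin N → Fin 3) (Fin N → Fin 3) (Polynomial ℤ) :=
  Matrix.of fun σ τ =>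
    ((((List.finRange N).reverse).map fun j => rhoAt j).prod :
      Matrix (Fin 2 × (Fin N → Fin 3)) (Fin 2 × (Fin N → Fin 3)) (Polynomial ℤ)) (0, σ) (1, τ)

/-- The reference state `|∧⟩ = |⇑…⇑⟩`, with coefficients in ℤ[y]. -/
def vacP (N : ℕ) : (Fin N → Fin 3) → Polynomial ℤ := fun σ => if σ = fun _ => 0 then 1 else 0

/-- The component `⟨τ|β^N|∧⟩ ∈ ℤ[y]`. -/
def comp (N : ℕ) (τ : Fin N → Fin 3) : Polynomial ℤ :=
  ((betaMat N ^ N).mulVec (vacP N)) τ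


/-- Even polynomials: polynomials in `y²`. -/
def Sev (q : Polynomial ℤ) : Prop := ∃ f : Polynomial ℤ, q = f.comp (Polynomial.X ^ 2)

/-- Odd polynomials: `y` times a polynomial in `y²`. -/
def Sod (q : Polynomial ℤ) : Prop :=
  ∃ f : Polynomial ℤ, q = Polynomial.X * f.comp (Polynomial.X ^ 2)

/-- Parity class attached to a pair of auxiliary indices. -/
def Par (a b : Fin 2) (q : Polynomial ℤ) : Prop := if a = b then Sev q else Sod q

lemma Sev_zero : Sev 0 := ⟨0, by simp⟩
lemma Sod_zero : Sod 0 := ⟨0, by simp⟩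
lemma Sev_one : Sev 1 := ⟨1, by simp⟩
lemma Sev_add {q r} (hq : Sev q) (hr : Sev r) : Sev (q + r) := by
  obtain ⟨f, rfl⟩ := hq; obtain ⟨g, rfl⟩ := hr; exact ⟨f + g, by simp⟩
lemma Sod_add {q r} (hq : Sod q) (hr : Sod r) : Sod (q + r) := by
  obtain ⟨f, rfl⟩ := hq; obtain ⟨g, rfl⟩ := hr; exact ⟨f + g, by simp; ring⟩
lemma Sev_mul {q r} (hq : Sev q) (hr : Sev r) : Sev (q * r) := by
  obtain ⟨f, rfl⟩ := hq; obtain ⟨g, rfl⟩ := hr; exact ⟨f * g, by simp⟩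
lemma Sev_mul_Sod {q r} (hq : Sev q) (hr : Sod r) : Sod (q * r) := by
  obtain ⟨f, rfl⟩ := hq; obtain ⟨g, rfl⟩ := hr; exact ⟨f * g, by simp; ring⟩
lemma Sod_mul_Sev {q r} (hq : Sod q) (hr : Sev r) : Sod (q * r) := by
  obtain ⟨f, rfl⟩ := hq; obtain ⟨g, rfl⟩ := hr; exact ⟨f * g, by simp; ring⟩
lemma Sod_mul_Sod {q r} (hq : Sod q) (hr : Sod r) : Sev (q * r) := by
  obtain ⟨f, rfl⟩ := hq; obtain ⟨g, rfl⟩ := hr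
  exact ⟨Polynomial.X * f * g, by simp [Polynomial.mul_comp]; ring⟩

lemma Par_zero (a b : Fin 2) : Par a b 0 := by
  unfold Par; split
  · exact Sev_zero
  · exact Sod_zero

lemma Par_add {a b q r} (hq : Par a b q) (hr : Par a b r) : Par a b (q + r) := by
  unfold Par at *; split at hq <;> simp_all
  · exact Sev_add hq hr
  · exact Sod_add hq hr

lemma Par_mul {a b c q r} (hq : Par a b q) (hr : Par b c r) : Par a c (q * r) := by
  unfold Par at *
  fin_cases a <;> fin_cases b <;> fin_cases c <;> simp_all <;>
    first
      | exact Sev_mul hq hr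
      | exact Sev_mul_Sod hq hr
      | exact Sod_mul_Sev hq hr
      | exact Sod_mul_Sod hq hr

/-- A matrix is "good" if every entry has the parity dictated by the auxiliary indices. -/
def GoodM {I : Type*} (M : Matrix (Fin 2 × I) (Fin 2 × I) (Polynomial ℤ)) : Prop :=
  ∀ p p', Par p.1 p'.1 (M p p')

lemma GoodM_one {I : Type*} [DecidableEq I] :
    GoodM (1 : Matrix (Fin 2 × I) (Fin 2 × I) (Polynomial ℤ)) := by
  intro p p'
  rw [Matrix.one_apply]
  split
  · subst ‹p = p'›; unfold Par; simp [Sev_one]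
  · exact Par_zero _ _

lemma GoodM_mul {I : Type*} [Fintype I] [DecidableEq I]
    {M N_ : Matrix (Fin 2 × I) (Fin 2 × I) (Polynomial ℤ)}
    (hM : GoodM M) (hN : GoodM N_) : GoodM (M * N_) := by
  intro p p'
  rw [Matrix.mul_apply]
  refine Finset.sum_induction _ (Par p.1 p'.1) (fun x y hx hy => Par_add hx hy)
    (Par_zero _ _) ?_
  intro q _
  exact Par_mul (hM p q) (hN q p')

lemma Sev_neg_one : Sev (-1) := ⟨-1, by simp⟩
lemma Sod_X : Sod Polynomial.X := ⟨1, by simp⟩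

lemma rho_par (ε ε' : Fin 2) (s s' : Fin 3) : Par ε ε' (rho (ε, s) (ε', s')) := by
  fin_cases ε <;> fin_cases ε' <;> fin_cases s <;> fin_cases s' <;>
    simp [rho, Par, Prod.ext_iff] <;>
    first
      | exact Sev_one
      | exact Sev_zero
      | exact Sev_neg_one
      | exact Sod_zero
      | exact Sod_X

lemma GoodM_rhoAt {N : ℕ} (j : Fin N) : GoodM (rhoAt j) := by
  intro p p'
  show Par p.1 p'.1 (rho (p.1, p.2 j) (p'.1, p'.2 j) * _)
  refine Par_mul (rho_par _ _ _ _) ?_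
  unfold Par; rw [if_pos rfl]
  show Sev (if ∀ k, k ≠ j → p.2 k = p'.2 k then 1 else 0)
  split
  · exact Sev_one
  · exact Sev_zero

lemma GoodM_prod {I : Type*} [Fintype I] [DecidableEq I]
    (L : List (Matrix (Fin 2 × I) (Fin 2 × I) (Polynomial ℤ)))
    (h : ∀ M ∈ L, GoodM M) : GoodM L.prod := by
  induction L with
  | nil => simpa using GoodM_one
  | cons M L ih =>
    rw [List.prod_cons]
    exact GoodM_mul (h M (by simp)) (ih fun M' hM' => h M' (by simp [hM']))

/-- Every matrix entry `⟨τ|β|σ⟩ ∈ ℤ[y]` lies in `y·ℤ[y²]`. -/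
theorem stmt18 (N : ℕ) (hN : 1 ≤ N) (σ τ : Fin N → Fin 3) :
    ∃ p : Polynomial ℤ, betaMat N τ σ = Polynomial.X * p.comp (Polynomial.X ^ 2) := by
  have h := GoodM_prod (((List.finRange N).reverse).map fun j => rhoAt j)
    (by intro M hM; simp only [List.mem_map] at hM; obtain ⟨j, _, rfl⟩ := hM; exact GoodM_rhoAt j)
  have h2 := h (0, τ) (1, σ)
  unfold Par at h2
  simp only [show ((0 : Fin 2) = 1) = False by simp, if_false] at h2
  exact h2

end
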